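/- (Embedding-complexity bound) For every predictor f ∈ F and encoder g ∈ G, and every f* ∈ F, g* ∈ G, the target risk satisfies R_T(fg) ≤ R_S(fg) + d_{FΔF}(p_S^g, p_T^g) + d_{F_{GΔG}}(p_S, p_T) + 2R_S(f*g) + R_S(f*g*) + R_T(f*g*). Consequently, taking infimum over f*, g*: R_T(fg) ≤ R_S(fg) + d_{FΔF}(p_S^g, p_T^g) + d_{F_{GΔG}}(p_S, p_T) + λ_{FG}(g), where λ_{FG}(g) = inf_{f' ∈ F, g' ∈ G} [2R_S(f'g) + R_S(f'g') + R_T(f'g')]. -/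

import Mathlib

open MeasureTheory

/-- Zero-one disagreement risk between two hypotheses under distribution `p`. -/
noncomputable def risk {X : Type*} [MeasurableSpace X] (p : Measure X)
    (h h' : X → Bool) : ℝ :=
  ∫ x, (if h x = h' x then (0 : ℝ) else 1) ∂p

section helpers
variable {X : Type*} [MeasurableSpace X] (p : Measure X) [IsProbabilityMeasure p]

lemma risk_integrable {h h' : X → Bool} (hh : Measurable h) (hh' : Measurable h') :
    Integrable (fun x => (if h x = h' x then (0:ℝ) else 1)) p := by
  have hs : MeasurableSet {x | h x = h' x} := measurableSet_eq_fun hh hh'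
  have hmeas : Measurable (fun x => (if h x = h' x then (0:ℝ) else 1)) :=
    Measurable.ite hs measurable_const measurable_const
  refine (integrable_const (1:ℝ)).mono' hmeas.aestronglyMeasurable ?_
  filter_upwards with x
  by_cases hx : h x = h' x <;> simp [hx]

omit [IsProbabilityMeasure p] in
lemma risk_nonneg {h h' : X → Bool} : 0 ≤ risk p h h' := by
  apply integral_nonneg; intro x; by_cases hx : h x = h' x <;> simp [hx]

lemma risk_le_one {h h' : X → Bool} (hh : Measurable h) (hh' : Measurable h') :
    risk p h h' ≤ 1 := by
  have := integral_mono (risk_integrable p hh hh') (integrable_const (1:ℝ))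
    (fun x => by by_cases hx : h x = h' x <;> simp [hx])
  simpa [risk] using this

omit [IsProbabilityMeasure p] in
lemma risk_symm {h h' : X → Bool} : risk p h h' = risk p h' h := by
  unfold risk; congr 1; ext x; simp [eq_comm]

lemma risk_triangle {h h' h'' : X → Bool} (hh : Measurable h) (hh' : Measurable h')
    (hh'' : Measurable h'') : risk p h h'' ≤ risk p h h' + risk p h' h'' := by
  unfold risk
  rw [← integral_add (risk_integrable p hh hh') (risk_integrable p hh' hh'')]
  apply integral_mono (risk_integrable p hh hh'')
    ((risk_integrable p hh hh').add (risk_integrable p hh' hh''))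
  intro x
  by_cases h1 : h x = h' x <;> by_cases h2 : h' x = h'' x <;>
    by_cases h3 : h x = h'' x <;> simp_all <;> norm_num

lemma abs_risk_sub_le_one (pS pT : Measure X) [IsProbabilityMeasure pS]
    [IsProbabilityMeasure pT] {a b : X → Bool} (ha : Measurable a) (hb : Measurable b) :
    |risk pS a b - risk pT a b| ≤ 1 := by
  rw [abs_sub_le_iff]
  constructor <;>
    linarith [risk_le_one pS ha hb, risk_le_one pT ha hb,
      risk_nonneg pS (h := a) (h' := b), risk_nonneg pT (h := a) (h' := b)]

end helpers

/-- Theorem 6: embedding-complexity bound, pointwise form and infimum form. -/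
theorem embedding_complexity_bound {X Z : Type*} [MeasurableSpace X]
    (pS pT : Measure X) [IsProbabilityMeasure pS] [IsProbabilityMeasure pT]
    (htrue : X → Bool) (hmtrue : Measurable htrue)
    (F : Set (Z → Bool)) (G : Set (X → Z))
    (hFne : F.Nonempty) (hGne : G.Nonempty)
    (hm : ∀ f ∈ F, ∀ g ∈ G, Measurable (f ∘ g))
    (f : Z → Bool) (hf : f ∈ F) (g : X → Z) (hg : g ∈ G) :
    (∀ fstar ∈ F, ∀ gstar ∈ G,
      risk pT (f ∘ g) htrue ≤
        risk pS (f ∘ g) htrue +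
        (⨆ f₁ : F, ⨆ f₂ : F,
          |risk pS ((f₁ : Z → Bool) ∘ g) ((f₂ : Z → Bool) ∘ g) -
            risk pT ((f₁ : Z → Bool) ∘ g) ((f₂ : Z → Bool) ∘ g)|) +
        (⨆ f₀ : F, ⨆ g₁ : G, ⨆ g₂ : G,
          |risk pS ((f₀ : Z → Bool) ∘ (g₁ : X → Z)) ((f₀ : Z → Bool) ∘ (g₂ : X → Z)) -
            risk pT ((f₀ : Z → Bool) ∘ (g₁ : X → Z)) ((f₀ : Z → Bool) ∘ (g₂ : X → Z))|) +
        (2 * risk pS (fstar ∘ g) htrue + risk pS (fstar ∘ gstar) htrue +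
          risk pT (fstar ∘ gstar) htrue)) ∧
    risk pT (f ∘ g) htrue ≤
      risk pS (f ∘ g) htrue +
      (⨆ f₁ : F, ⨆ f₂ : F,
        |risk pS ((f₁ : Z → Bool) ∘ g) ((f₂ : Z → Bool) ∘ g) -
          risk pT ((f₁ : Z → Bool) ∘ g) ((f₂ : Z → Bool) ∘ g)|) +
      (⨆ f₀ : F, ⨆ g₁ : G, ⨆ g₂ : G,
        |risk pS ((f₀ : Z → Bool) ∘ (g₁ : X → Z)) ((f₀ : Z → Bool) ∘ (g₂ : X → Z)) -
          risk pT ((f₀ : Z → Bool) ∘ (g₁ : X → Z)) ((f₀ : Z → Bool) ∘ (g₂ : X → Z))|) +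
      (⨅ f' : F, ⨅ g' : G,
        2 * risk pS ((f' : Z → Bool) ∘ g) htrue +
          risk pS ((f' : Z → Bool) ∘ (g' : X → Z)) htrue +
          risk pT ((f' : Z → Bool) ∘ (g' : X → Z)) htrue) := by
  haveI : Nonempty F := hFne.to_subtype
  haveI : Nonempty G := hGne.to_subtype
  have habs : ∀ (a b : X → Bool), Measurable a → Measurable b →
      |risk pS a b - risk pT a b| ≤ 1 := fun a b ha hb => abs_risk_sub_le_one pS pT ha hb
  -- boundedness facts for the F-sup
  have bddF2 : ∀ f₁ : F, BddAbove (Set.range fun f₂ : F =>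
      |risk pS ((f₁ : Z → Bool) ∘ g) ((f₂ : Z → Bool) ∘ g) -
        risk pT ((f₁ : Z → Bool) ∘ g) ((f₂ : Z → Bool) ∘ g)|) := by
    intro f₁
    refine ⟨1, ?_⟩; rintro _ ⟨f₂, rfl⟩
    exact habs _ _ (hm _ f₁.2 g hg) (hm _ f₂.2 g hg)
  have bddF1 : BddAbove (Set.range fun f₁ : F => ⨆ f₂ : F,
      |risk pS ((f₁ : Z → Bool) ∘ g) ((f₂ : Z → Bool) ∘ g) -
        risk pT ((f₁ : Z → Bool) ∘ g) ((f₂ : Z → Bool) ∘ g)|) := by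
    refine ⟨1, ?_⟩; rintro _ ⟨f₁, rfl⟩
    exact ciSup_le fun f₂ => habs _ _ (hm _ f₁.2 g hg) (hm _ f₂.2 g hg)
  -- boundedness facts for the G-sup
  have bddG2 : ∀ (f₀ : F) (g₁ : G), BddAbove (Set.range fun g₂ : G =>
      |risk pS ((f₀ : Z → Bool) ∘ (g₁ : X → Z)) ((f₀ : Z → Bool) ∘ (g₂ : X → Z)) -
        risk pT ((f₀ : Z → Bool) ∘ (g₁ : X → Z)) ((f₀ : Z → Bool) ∘ (g₂ : X → Z))|) := by
    intro f₀ g₁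
    refine ⟨1, ?_⟩; rintro _ ⟨g₂, rfl⟩
    exact habs _ _ (hm _ f₀.2 _ g₁.2) (hm _ f₀.2 _ g₂.2)
  have bddG1 : ∀ f₀ : F, BddAbove (Set.range fun g₁ : G => ⨆ g₂ : G,
      |risk pS ((f₀ : Z → Bool) ∘ (g₁ : X → Z)) ((f₀ : Z → Bool) ∘ (g₂ : X → Z)) -
        risk pT ((f₀ : Z → Bool) ∘ (g₁ : X → Z)) ((f₀ : Z → Bool) ∘ (g₂ : X → Z))|) := by
    intro f₀
    refine ⟨1, ?_⟩; rintro _ ⟨g₁, rfl⟩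
    exact ciSup_le fun g₂ => habs _ _ (hm _ f₀.2 _ g₁.2) (hm _ f₀.2 _ g₂.2)
  have bddG0 : BddAbove (Set.range fun f₀ : F => ⨆ g₁ : G, ⨆ g₂ : G,
      |risk pS ((f₀ : Z → Bool) ∘ (g₁ : X → Z)) ((f₀ : Z → Bool) ∘ (g₂ : X → Z)) -
        risk pT ((f₀ : Z → Bool) ∘ (g₁ : X → Z)) ((f₀ : Z → Bool) ∘ (g₂ : X → Z))|) := by
    refine ⟨1, ?_⟩; rintro _ ⟨f₀, rfl⟩
    exact ciSup_le fun g₁ => ciSup_le fun g₂ =>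
      habs _ _ (hm _ f₀.2 _ g₁.2) (hm _ f₀.2 _ g₂.2)
  have key : ∀ fstar ∈ F, ∀ gstar ∈ G,
      risk pT (f ∘ g) htrue ≤
        risk pS (f ∘ g) htrue +
        (⨆ f₁ : F, ⨆ f₂ : F,
          |risk pS ((f₁ : Z → Bool) ∘ g) ((f₂ : Z → Bool) ∘ g) -
            risk pT ((f₁ : Z → Bool) ∘ g) ((f₂ : Z → Bool) ∘ g)|) +
        (⨆ f₀ : F, ⨆ g₁ : G, ⨆ g₂ : G,
          |risk pS ((f₀ : Z → Bool) ∘ (g₁ : X → Z)) ((f₀ : Z → Bool) ∘ (g₂ : X → Z)) -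
            risk pT ((f₀ : Z → Bool) ∘ (g₁ : X → Z)) ((f₀ : Z → Bool) ∘ (g₂ : X → Z))|) +
        (2 * risk pS (fstar ∘ g) htrue + risk pS (fstar ∘ gstar) htrue +
          risk pT (fstar ∘ gstar) htrue) := by
    intro fs hfs gs hgs
    have m1 : Measurable (f ∘ g) := hm f hf g hg
    have m2 : Measurable (fs ∘ g) := hm fs hfs g hg
    have m3 : Measurable (fs ∘ gs) := hm fs hfs gs hgs
    have t1 : risk pT (f ∘ g) htrue ≤ risk pT (f ∘ g) (fs ∘ gs) + risk pT (fs ∘ gs) htrue :=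
      risk_triangle pT m1 m3 hmtrue
    have t2 : risk pT (f ∘ g) (fs ∘ gs) ≤
        risk pT (f ∘ g) (fs ∘ g) + risk pT (fs ∘ g) (fs ∘ gs) :=
      risk_triangle pT m1 m2 m3
    -- F-divergence step
    have h1 : |risk pS (f ∘ g) (fs ∘ g) - risk pT (f ∘ g) (fs ∘ g)| ≤
        ⨆ f₁ : F, ⨆ f₂ : F,
          |risk pS ((f₁ : Z → Bool) ∘ g) ((f₂ : Z → Bool) ∘ g) -
            risk pT ((f₁ : Z → Bool) ∘ g) ((f₂ : Z → Bool) ∘ g)| := by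
      calc |risk pS (f ∘ g) (fs ∘ g) - risk pT (f ∘ g) (fs ∘ g)|
          ≤ ⨆ f₂ : F, |risk pS (f ∘ g) ((f₂ : Z → Bool) ∘ g) -
              risk pT (f ∘ g) ((f₂ : Z → Bool) ∘ g)| :=
            le_ciSup (bddF2 ⟨f, hf⟩) ⟨fs, hfs⟩
        _ ≤ _ := le_ciSup bddF1 ⟨f, hf⟩
    -- G-divergence step
    have h2 : |risk pS (fs ∘ g) (fs ∘ gs) - risk pT (fs ∘ g) (fs ∘ gs)| ≤
        ⨆ f₀ : F, ⨆ g₁ : G, ⨆ g₂ : G,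
          |risk pS ((f₀ : Z → Bool) ∘ (g₁ : X → Z)) ((f₀ : Z → Bool) ∘ (g₂ : X → Z)) -
            risk pT ((f₀ : Z → Bool) ∘ (g₁ : X → Z)) ((f₀ : Z → Bool) ∘ (g₂ : X → Z))| := by
      calc |risk pS (fs ∘ g) (fs ∘ gs) - risk pT (fs ∘ g) (fs ∘ gs)|
          ≤ ⨆ g₂ : G, |risk pS (fs ∘ g) (fs ∘ (g₂ : X → Z)) -
              risk pT (fs ∘ g) (fs ∘ (g₂ : X → Z))| :=
            le_ciSup (bddG2 ⟨fs, hfs⟩ ⟨g, hg⟩) ⟨gs, hgs⟩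
        _ ≤ ⨆ g₁ : G, ⨆ g₂ : G, |risk pS (fs ∘ (g₁ : X → Z)) (fs ∘ (g₂ : X → Z)) -
              risk pT (fs ∘ (g₁ : X → Z)) (fs ∘ (g₂ : X → Z))| :=
            le_ciSup (bddG1 ⟨fs, hfs⟩) ⟨g, hg⟩
        _ ≤ _ := le_ciSup bddG0 ⟨fs, hfs⟩
    have abs1 := neg_abs_le (risk pS (f ∘ g) (fs ∘ g) - risk pT (f ∘ g) (fs ∘ g))
    have abs2 := neg_abs_le (risk pS (fs ∘ g) (fs ∘ gs) - risk pT (fs ∘ g) (fs ∘ gs))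
    have t5 : risk pS (f ∘ g) (fs ∘ g) ≤
        risk pS (f ∘ g) htrue + risk pS htrue (fs ∘ g) :=
      risk_triangle pS m1 hmtrue m2
    have t6 : risk pS (fs ∘ g) (fs ∘ gs) ≤
        risk pS (fs ∘ g) htrue + risk pS htrue (fs ∘ gs) :=
      risk_triangle pS m2 hmtrue m3
    have s1 : risk pS htrue (fs ∘ g) = risk pS (fs ∘ g) htrue := risk_symm pS
    have s2 : risk pS htrue (fs ∘ gs) = risk pS (fs ∘ gs) htrue := risk_symm pS
    rw [s1] at t5; rw [s2] at t6
    linarith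
  refine ⟨key, ?_⟩
  have hinf : risk pT (f ∘ g) htrue -
      (risk pS (f ∘ g) htrue +
        (⨆ f₁ : F, ⨆ f₂ : F,
          |risk pS ((f₁ : Z → Bool) ∘ g) ((f₂ : Z → Bool) ∘ g) -
            risk pT ((f₁ : Z → Bool) ∘ g) ((f₂ : Z → Bool) ∘ g)|) +
        (⨆ f₀ : F, ⨆ g₁ : G, ⨆ g₂ : G,
          |risk pS ((f₀ : Z → Bool) ∘ (g₁ : X → Z)) ((f₀ : Z → Bool) ∘ (g₂ : X → Z)) -
            risk pT ((f₀ : Z → Bool) ∘ (g₁ : X → Z)) ((f₀ : Z → Bool) ∘ (g₂ : X → Z))|)) ≤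
      ⨅ f' : F, ⨅ g' : G,
        2 * risk pS ((f' : Z → Bool) ∘ g) htrue +
          risk pS ((f' : Z → Bool) ∘ (g' : X → Z)) htrue +
          risk pT ((f' : Z → Bool) ∘ (g' : X → Z)) htrue := by
    refine le_ciInf fun f' => le_ciInf fun g' => ?_
    have := key f' f'.2 g' g'.2
    linarith
  linarith
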